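/- Explicit MIO dilution map: let ρ' be a state, δ an incoherent state, and M ≥ 2 an integer with ρ' ≤ Mδ in the Loewner order. Then the map Λ(ω) = (M/(M−1))[(Tr[Ψ_M ω] − 1/M)ρ' + (1 − Tr[Ψ_M ω])δ] is completely positive and trace preserving, maps every incoherent state to an incoherent state, and satisfies Λ(Ψ_M) = ρ'. -/

import Mathlib

open scoped Matrix ComplexOrder

namespace OneShot

variable {ι κ : Type*} [Fintype ι] [DecidableEq ι] [Fintype κ] [DecidableEq κ]

/-- A quantum state: a positive semidefinite matrix with unit trace. -/
def IsState (ρ : Matrix ι ι ℂ) : Prop := ρ.PosSemidef ∧ ρ.trace = 1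

/-- An incoherent state: a state that is diagonal in the computational basis. -/
def IsIncoherent (ρ : Matrix ι ι ℂ) : Prop := IsState ρ ∧ ρ.IsDiag

/-- The completely dephasing channel `Δ`. -/
def dephase (ρ : Matrix ι ι ℂ) : Matrix ι ι ℂ := Matrix.diagonal fun i => ρ i i

/-- The max-relative entropy of coherence
`C_max(ρ) = min_{δ ∈ 𝓘} D_max(ρ‖δ) = log₂ min {λ ≥ 0 | ∃ δ ∈ 𝓘, ρ ≤ λ δ}`. -/
noncomputable def Cmax (ρ : Matrix ι ι ℂ) : ℝ :=
  Real.logb 2 (sInf {l : ℝ | 0 ≤ l ∧ ∃ δ, IsIncoherent δ ∧ (l • δ - ρ).PosSemidef})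

/-- `C_{Δ,max}(ρ) = log₂ min {λ ≥ 0 | ρ ≤ λ Δ(ρ)}`. -/
noncomputable def CDmax (ρ : Matrix ι ι ℂ) : ℝ :=
  Real.logb 2 (sInf {l : ℝ | 0 ≤ l ∧ (l • dephase ρ - ρ).PosSemidef})

/-- Complete positivity of a linear map on matrices. -/
def CompletelyPositive (Λ : Matrix ι ι ℂ →ₗ[ℂ] Matrix κ κ ℂ) : Prop :=
  ∀ (k : ℕ) (M : Matrix (Fin k × ι) (Fin k × ι) ℂ), M.PosSemidef →
    (Matrix.of fun p q : Fin k × κ =>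
      Λ (Matrix.of fun x y => M (p.1, x) (q.1, y)) p.2 q.2).PosSemidef

/-- Trace preservation. -/
def TracePreserving (Λ : Matrix ι ι ℂ →ₗ[ℂ] Matrix κ κ ℂ) : Prop :=
  ∀ A, (Λ A).trace = A.trace

/-- A maximally incoherent operation (MIO): a CPTP map sending every incoherent state
to an incoherent state. -/
def IsMIO (Λ : Matrix ι ι ℂ →ₗ[ℂ] Matrix κ κ ℂ) : Prop :=
  CompletelyPositive Λ ∧ TracePreserving Λ ∧ ∀ δ, IsIncoherent δ → IsIncoherent (Λ δ)

/-- A dephasing-covariant incoherent operation (DIO): a CPTP map commuting with `Δ`. -/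
def IsDIO (Λ : Matrix ι ι ℂ →ₗ[ℂ] Matrix ι ι ℂ) : Prop :=
  CompletelyPositive Λ ∧ TracePreserving Λ ∧ ∀ ρ, Λ (dephase ρ) = dephase (Λ ρ)

/-- An incoherent-preserving (Kraus) operator: `K δ Kᴴ` is a nonnegative multiple of an
incoherent state, for every incoherent state `δ`. -/
def IncoherentPreserving (K : Matrix κ ι ℂ) : Prop :=
  ∀ δ : Matrix ι ι ℂ, IsIncoherent δ →
    ∃ c : ℝ, 0 ≤ c ∧ ∃ δ' : Matrix κ κ ℂ, IsIncoherent δ' ∧ K * δ * Kᴴ = (c : ℂ) • δ'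

/-- An incoherent operation (IO). -/
def IsIO (Λ : Matrix ι ι ℂ →ₗ[ℂ] Matrix κ κ ℂ) : Prop :=
  ∃ (N : ℕ) (K : Fin N → Matrix κ ι ℂ),
    (∀ n, IncoherentPreserving (K n)) ∧ (∑ n, (K n)ᴴ * K n = 1) ∧
    ∀ ρ, Λ ρ = ∑ n, K n * ρ * (K n)ᴴ

/-- A strictly incoherent operation (SIO). -/
def IsSIO (Λ : Matrix ι ι ℂ →ₗ[ℂ] Matrix κ κ ℂ) : Prop :=
  ∃ (N : ℕ) (K : Fin N → Matrix κ ι ℂ),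
    (∀ n, IncoherentPreserving (K n)) ∧ (∀ n, IncoherentPreserving (K n)ᴴ) ∧
    (∑ n, (K n)ᴴ * K n = 1) ∧ ∀ ρ, Λ ρ = ∑ n, K n * ρ * (K n)ᴴ

/-- The outer product `|ψ⟩⟨ψ|`. -/
def outer (ψ : ι → ℂ) : Matrix ι ι ℂ := Matrix.of fun i j => ψ i * star (ψ j)

/-- `T ψ` is the number of nonzero computational-basis coefficients of `ψ`. -/
noncomputable def T (ψ : ι → ℂ) : ℕ := (Finset.univ.filter fun i => ψ i ≠ 0).card

/-- A finite pure-state decomposition `ρ = Σ_j p_j |ψ_j⟩⟨ψ_j|`. -/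
def IsDecomposition (ρ : Matrix ι ι ℂ) (n : ℕ) (p : Fin n → ℝ) (ψ : Fin n → ι → ℂ) : Prop :=
  (∀ j, 0 < p j) ∧ (∑ j, p j = 1) ∧ (∀ j, ∑ i, Complex.normSq (ψ j i) = 1) ∧
    ρ = ∑ j, p j • outer (ψ j)

/-- `C_0(ρ) = min over decompositions of max_j log₂ T(ψ_j)`. -/
noncomputable def C0 (ρ : Matrix ι ι ℂ) : ℝ :=
  sInf { r | ∃ n p ψ, IsDecomposition ρ n p ψ ∧
    r = Real.logb 2 (↑(Finset.univ.sup fun j => T (ψ j)) : ℝ) }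

/-- Matrix square root of a positive semidefinite matrix (junk value `0` elsewhere). -/
noncomputable def msqrt (A : Matrix ι ι ℂ) : Matrix ι ι ℂ :=
  letI := Classical.propDecidable A.PosSemidef
  if h : A.PosSemidef then
    (h.1.eigenvectorUnitary : Matrix ι ι ℂ) *
      Matrix.diagonal (fun i => (Real.sqrt (h.1.eigenvalues i) : ℂ)) *
      (star h.1.eigenvectorUnitary : Matrix ι ι ℂ)
  else 0

/-- Uhlmann fidelity `F(ρ,σ) = (Tr √(√ρ σ √ρ))²`. -/
noncomputable def Fid (ρ σ : Matrix ι ι ℂ) : ℝ :=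
  ((msqrt (msqrt ρ * σ * msqrt ρ)).trace.re) ^ 2

/-- Smoothed `C_max`. -/
noncomputable def Cmaxeps (ρ : Matrix ι ι ℂ) (ε : ℝ) : ℝ :=
  sInf { r | ∃ ρ', IsState ρ' ∧ 1 - ε ≤ Fid ρ ρ' ∧ r = Cmax ρ' }

/-- Smoothed `C_{Δ,max}`. -/
noncomputable def CDmaxeps (ρ : Matrix ι ι ℂ) (ε : ℝ) : ℝ :=
  sInf { r | ∃ ρ', IsState ρ' ∧ 1 - ε ≤ Fid ρ ρ' ∧ r = CDmax ρ' }

/-- Smoothed `C_0`. -/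
noncomputable def C0eps (ρ : Matrix ι ι ℂ) (ε : ℝ) : ℝ :=
  sInf { r | ∃ ρ', IsState ρ' ∧ 1 - ε ≤ Fid ρ ρ' ∧ r = C0 ρ' }

/-- The maximally coherent state `Ψ_M = |Ψ_M⟩⟨Ψ_M|` of dimension `M`. -/
noncomputable def PsiM (M : ℕ) : Matrix (Fin M) (Fin M) ℂ := Matrix.of fun _ _ => (1 : ℂ) / M

/-- One-shot coherence cost under MIO. -/
noncomputable def CMIOeps (ρ : Matrix ι ι ℂ) (ε : ℝ) : ℝ :=
  sInf { r | ∃ M : ℕ, 1 ≤ M ∧ r = Real.logb 2 M ∧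
    ∃ Λ : Matrix (Fin M) (Fin M) ℂ →ₗ[ℂ] Matrix ι ι ℂ, IsMIO Λ ∧ 1 - ε ≤ Fid ρ (Λ (PsiM M)) }

/-- One-shot coherence cost under DIO. -/
noncomputable def CDIOeps (ρ : Matrix ι ι ℂ) (ε : ℝ) : ℝ :=
  sInf { r | ∃ M : ℕ, 1 ≤ M ∧ r = Real.logb 2 M ∧
    ∃ Λ : Matrix (Fin M) (Fin M) ℂ →ₗ[ℂ] Matrix ι ι ℂ,
      CompletelyPositive Λ ∧ TracePreserving Λ ∧ (∀ ω, Λ (dephase ω) = dephase (Λ ω)) ∧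
      1 - ε ≤ Fid ρ (Λ (PsiM M)) }

/-- One-shot coherence cost under IO. -/
noncomputable def CIOeps (ρ : Matrix ι ι ℂ) (ε : ℝ) : ℝ :=
  sInf { r | ∃ M : ℕ, 1 ≤ M ∧ r = Real.logb 2 M ∧
    ∃ Λ : Matrix (Fin M) (Fin M) ℂ →ₗ[ℂ] Matrix ι ι ℂ, IsIO Λ ∧ 1 - ε ≤ Fid ρ (Λ (PsiM M)) }

/-- One-shot coherence cost under SIO. -/
noncomputable def CSIOeps (ρ : Matrix ι ι ℂ) (ε : ℝ) : ℝ :=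
  sInf { r | ∃ M : ℕ, 1 ≤ M ∧ r = Real.logb 2 M ∧
    ∃ Λ : Matrix (Fin M) (Fin M) ℂ →ₗ[ℂ] Matrix ι ι ℂ, IsSIO Λ ∧ 1 - ε ≤ Fid ρ (Λ (PsiM M)) }

/-- Matrix logarithm (base 2) via the spectral decomposition, with `log₂ 0 = 0` junk
convention on the kernel, and junk value `0` on non-Hermitian matrices. -/
noncomputable def mlog2 (A : Matrix ι ι ℂ) : Matrix ι ι ℂ :=
  letI := Classical.propDecidable A.IsHermitian
  if h : A.IsHermitian then
    (h.eigenvectorUnitary : Matrix ι ι ℂ) *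
      Matrix.diagonal (fun i => (Real.logb 2 (h.eigenvalues i) : ℂ)) *
      (h.eigenvectorUnitary : Matrix ι ι ℂ)ᴴ
  else 0

/-- The relative entropy of coherence `C_r(ρ) = min_{δ ∈ 𝓘} S(ρ‖δ)`, where the minimum
is (equivalently) restricted to those `δ` whose support contains the support of `ρ`,
on which `S(ρ‖δ) = Tr[ρ (log₂ ρ − log₂ δ)]` is finite. -/
noncomputable def Cr (ρ : Matrix ι ι ℂ) : ℝ :=
  sInf { r | ∃ δ, IsIncoherent δ ∧ (∀ v : ι → ℂ, δ.mulVec v = 0 → ρ.mulVec v = 0) ∧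
    r = ((ρ * (mlog2 ρ - mlog2 δ)).trace).re }

/-- Von Neumann entropy (base 2). -/
noncomputable def vN (σ : Matrix ι ι ℂ) : ℝ := -((σ * mlog2 σ).trace.re)

/-- The coherence of formation. -/
noncomputable def Cf (ρ : Matrix ι ι ℂ) : ℝ :=
  sInf { r | ∃ n p ψ, IsDecomposition ρ n p ψ ∧
    r = ∑ j, p j * vN (dephase (outer (ψ j))) }

/-- The set `A_ρ = { (1/t)[(1+t)Δ(ρ) − ρ] : t > 0, (1+t)Δ(ρ) − ρ ≥ 0 }`. -/
def Aset (ρ : Matrix ι ι ℂ) : Set (Matrix ι ι ℂ) :=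
  { σ | ∃ t : ℝ, 0 < t ∧ ((1 + t) • dephase ρ - ρ).PosSemidef ∧
      σ = t⁻¹ • ((1 + t) • dephase ρ - ρ) }

/-- The `n`-fold tensor power `ρ^{⊗ n}`. -/
def tpow (ρ : Matrix ι ι ℂ) (n : ℕ) : Matrix (Fin n → ι) (Fin n → ι) ℂ :=
  Matrix.of fun i j => ∏ t, ρ (i t) (j t)

section Aux

lemma posSemidef_smul_of_nonneg {A : Matrix ι ι ℂ} (hA : A.PosSemidef) {c : ℂ}
    (hc : 0 ≤ c) : (c • A).PosSemidef := by
  have hcs : star c = c := by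
    rw [Complex.star_def, Complex.conj_eq_iff_im]
    exact ((Complex.le_def.mp hc).2).symm
  constructor
  · show (c • A)ᴴ = c • A
    rw [Matrix.conjTranspose_smul, hcs, hA.1.eq]
  · exact (hA.smul hc).2

/-- The measure-and-prepare map `ω ↦ Tr[A ω] X`. -/
noncomputable def mpMap (A : Matrix ι ι ℂ) (X : Matrix κ κ ℂ) :
    Matrix ι ι ℂ →ₗ[ℂ] Matrix κ κ ℂ where
  toFun ω := (A * ω).trace • X
  map_add' ω₁ ω₂ := by simp [Matrix.mul_add, add_smul]
  map_smul' c ω := by simp [Matrix.mul_smul, mul_smul]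

lemma mpMap_apply (A : Matrix ι ι ℂ) (X : Matrix κ κ ℂ) (ω : Matrix ι ι ℂ) :
    mpMap A X ω = (A * ω).trace • X := rfl

open scoped MatrixOrder in
lemma mpMap_cp {A : Matrix ι ι ℂ} {X : Matrix κ κ ℂ} (hA : A.PosSemidef)
    (hX : X.PosSemidef) : CompletelyPositive (mpMap A X) := by
  intro k M hM
  set sA := CFC.sqrt A with hsA
  set sX := CFC.sqrt X with hsX
  have hAherm : sAᴴ = sA := (Matrix.nonneg_iff_posSemidef.mp (CFC.sqrt_nonneg A)).isHermitian
  have hXherm : sXᴴ = sX := (Matrix.nonneg_iff_posSemidef.mp (CFC.sqrt_nonneg X)).isHermitian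
  set L : ι → κ → Matrix (Fin k × κ) (Fin k × ι) ℂ := fun s t =>
    Matrix.of fun p y => if p.1 = y.1 then sX p.2 t * sA s y.2 else 0 with hL
  have key : (Matrix.of fun p q : Fin k × κ =>
      mpMap A X (Matrix.of fun x y => M (p.1, x) (q.1, y)) p.2 q.2) =
      ∑ s : ι, ∑ t : κ, L s t * M * (L s t)ᴴ := by
    ext p q
    have hblk : (Matrix.of fun p q : Fin k × κ =>
        mpMap A X (Matrix.of fun x y => M (p.1, x) (q.1, y)) p.2 q.2) p q =
        (∑ z, ∑ y, A z y * M (p.1, y) (q.1, z)) * X p.2 q.2 := by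
      simp only [Matrix.of_apply, mpMap_apply, Matrix.smul_apply, smul_eq_mul,
        Matrix.trace, Matrix.diag, Matrix.mul_apply]
    have hterm : ∀ s t, (L s t * M * (L s t)ᴴ) p q
        = (sX p.2 t * star (sX q.2 t)) *
          ∑ z, ∑ y, (sA s y * star (sA s z)) * M (p.1, y) (q.1, z) := by
      intro s t
      have h1 : ∀ c : Fin k × ι, (L s t * M) p c
          = ∑ y, sX p.2 t * sA s y * M (p.1, y) c := by
        intro c
        rw [Matrix.mul_apply, Fintype.sum_prod_type]
        rw [Finset.sum_eq_single p.1]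
        · simp [hL]
        · intro b _ hb
          simp [hL, Ne.symm hb]
        · simp
      rw [Matrix.mul_apply, Fintype.sum_prod_type]
      rw [Finset.sum_eq_single q.1]
      · rw [Finset.mul_sum]
        refine Finset.sum_congr rfl fun z _ => ?_
        have h2 : (L s t)ᴴ (q.1, z) q = star (sA s z) * star (sX q.2 t) := by
          simp [hL, Matrix.conjTranspose_apply, star_mul', mul_comm]
        rw [h1, h2, Finset.sum_mul, Finset.mul_sum]
        refine Finset.sum_congr rfl fun y _ => ?_
        ring
      · intro b _ hb
        simp [Matrix.conjTranspose_apply, hL, Ne.symm hb]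
      · simp
    have hXs : (∑ t, sX p.2 t * star (sX q.2 t)) = X p.2 q.2 := by
      calc (∑ t, sX p.2 t * star (sX q.2 t)) = (sX * sXᴴ) p.2 q.2 := by
            simp [Matrix.mul_apply, Matrix.conjTranspose_apply]
        _ = X p.2 q.2 := by rw [hXherm, CFC.sqrt_mul_sqrt_self X hX.nonneg]
    have hAs : ∀ y z : ι, (∑ s, sA s y * star (sA s z)) = A z y := by
      intro y z
      calc (∑ s, sA s y * star (sA s z)) = (sAᴴ * sA) z y := by
            simp [Matrix.mul_apply, Matrix.conjTranspose_apply, mul_comm]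
        _ = A z y := by rw [hAherm, CFC.sqrt_mul_sqrt_self A hA.nonneg]
    rw [hblk]
    have hsum : (∑ s : ι, ∑ t : κ, L s t * M * (L s t)ᴴ) p q
        = ∑ s : ι, ∑ t : κ, (L s t * M * (L s t)ᴴ) p q := by
      simp [Matrix.sum_apply]
    rw [hsum]
    refine Eq.symm ?_
    calc ∑ s : ι, ∑ t : κ, (L s t * M * (L s t)ᴴ) p q
        = ∑ s : ι, (∑ t : κ, sX p.2 t * star (sX q.2 t)) *
            ∑ z, ∑ y, (sA s y * star (sA s z)) * M (p.1, y) (q.1, z) := by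
          refine Finset.sum_congr rfl fun s _ => ?_
          rw [Finset.sum_mul]
          exact Finset.sum_congr rfl fun t _ => hterm s t
      _ = ∑ s : ι, X p.2 q.2 *
            ∑ z, ∑ y, (sA s y * star (sA s z)) * M (p.1, y) (q.1, z) := by
          simp only [hXs]
      _ = X p.2 q.2 * ∑ s : ι, ∑ z, ∑ y,
            (sA s y * star (sA s z)) * M (p.1, y) (q.1, z) := by
          rw [Finset.mul_sum]
      _ = X p.2 q.2 * ∑ z, ∑ y,
            (∑ s : ι, sA s y * star (sA s z)) * M (p.1, y) (q.1, z) := by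
          congr 1
          rw [Finset.sum_comm]
          refine Finset.sum_congr rfl fun z _ => ?_
          rw [Finset.sum_comm]
          refine Finset.sum_congr rfl fun y _ => ?_
          rw [← Finset.sum_mul]
      _ = X p.2 q.2 * ∑ z, ∑ y, A z y * M (p.1, y) (q.1, z) := by
          simp only [hAs]
      _ = (∑ z, ∑ y, A z y * M (p.1, y) (q.1, z)) * X p.2 q.2 := mul_comm _ _
  rw [key]
  refine Finset.sum_induction _ _ (fun a b ha hb => ha.add hb) .zero fun s _ => ?_
  exact Finset.sum_induction _ _ (fun a b ha hb => ha.add hb) .zero fun t _ =>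
    hM.mul_mul_conjTranspose_same (L s t)

lemma completelyPositive_add {Λ₁ Λ₂ : Matrix ι ι ℂ →ₗ[ℂ] Matrix κ κ ℂ}
    (h1 : CompletelyPositive Λ₁) (h2 : CompletelyPositive Λ₂) :
    CompletelyPositive (Λ₁ + Λ₂) := by
  intro k M hM
  have : (Matrix.of fun p q : Fin k × κ =>
      (Λ₁ + Λ₂) (Matrix.of fun x y => M (p.1, x) (q.1, y)) p.2 q.2) =
      (Matrix.of fun p q : Fin k × κ =>
        Λ₁ (Matrix.of fun x y => M (p.1, x) (q.1, y)) p.2 q.2) +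
      (Matrix.of fun p q : Fin k × κ =>
        Λ₂ (Matrix.of fun x y => M (p.1, x) (q.1, y)) p.2 q.2) := by
    ext p q
    simp [Matrix.add_apply]
  rw [this]
  exact (h1 k M hM).add (h2 k M hM)

end Aux

/-- explicit MIO dilution map. -/
theorem MIO_dilution_map {d M : ℕ} (hM : 2 ≤ M) (ρ' δ : Matrix (Fin d) (Fin d) ℂ)
    (hρ' : IsState ρ') (hδ : IsIncoherent δ) (hle : ((M : ℝ) • δ - ρ').PosSemidef) :
    ∃ Λ : Matrix (Fin M) (Fin M) ℂ →ₗ[ℂ] Matrix (Fin d) (Fin d) ℂ,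
      (∀ ω, IsState ω → Λ ω = ((M : ℂ) / ((M : ℂ) - 1)) •
        (((PsiM M * ω).trace - 1 / (M : ℂ)) • ρ' + (1 - (PsiM M * ω).trace) • δ)) ∧
      CompletelyPositive Λ ∧ TracePreserving Λ ∧
      (∀ δ₀, IsIncoherent δ₀ → IsIncoherent (Λ δ₀)) ∧
      Λ (PsiM M) = ρ' := by
  have hMne : (M : ℂ) ≠ 0 := Nat.cast_ne_zero.mpr (by omega)
  have hM1 : (M : ℂ) - 1 ≠ 0 := by
    rw [sub_ne_zero]
    exact_mod_cast (by omega : M ≠ 1)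
  set Ψ : Matrix (Fin M) (Fin M) ℂ := PsiM M with hΨ
  have hΨentry : ∀ i j, Ψ i j = (M : ℂ)⁻¹ := fun i j => by
    simp [hΨ, PsiM, one_div]
  have hΨtr : Ψ.trace = 1 := by
    simp only [Matrix.trace, Matrix.diag, hΨentry, Finset.sum_const, Finset.card_univ,
      Fintype.card_fin, nsmul_eq_mul]
    field_simp
  have hΨ2 : Ψ * Ψ = Ψ := by
    ext i j
    simp only [Matrix.mul_apply, hΨentry, Finset.sum_const, Finset.card_univ,
      Fintype.card_fin, nsmul_eq_mul]
    field_simp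
  have hΨps : Ψ.PosSemidef := by
    have h0 : Ψ = (M : ℂ)⁻¹ • ((Matrix.of fun (_ : Fin 1) (_ : Fin M) => (1 : ℂ))ᴴ *
        (Matrix.of fun (_ : Fin 1) (_ : Fin M) => (1 : ℂ))) := by
      ext i j
      simp [Matrix.mul_apply, Matrix.conjTranspose_apply, hΨentry]
    rw [h0]
    refine posSemidef_smul_of_nonneg (Matrix.posSemidef_conjTranspose_mul_self _) ?_
    have hc : (M : ℂ)⁻¹ = (((M : ℝ)⁻¹ : ℝ) : ℂ) := by push_cast; ring
    rw [hc]
    rw [Complex.zero_le_real]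
    positivity
  have h1Ψps : (1 - Ψ).PosSemidef := by
    have hherm : (1 - Ψ)ᴴ = 1 - Ψ := by
      rw [Matrix.conjTranspose_sub, Matrix.conjTranspose_one, hΨps.isHermitian.eq]
    have hsq : (1 - Ψ) = (1 - Ψ)ᴴ * (1 - Ψ) := by
      rw [hherm, Matrix.sub_mul, Matrix.one_mul, Matrix.mul_sub, Matrix.mul_one, hΨ2]
      abel
    rw [hsq]
    exact Matrix.posSemidef_conjTranspose_mul_self _
  set σ : Matrix (Fin d) (Fin d) ℂ := ((M : ℂ) - 1)⁻¹ • ((M : ℂ) • δ - ρ') with hσ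
  have hcast : (M : ℂ) • δ = (M : ℝ) • δ := by
    ext i j
    simp [Matrix.smul_apply, Complex.real_smul]
  have hσps : σ.PosSemidef := by
    rw [hσ, hcast]
    refine posSemidef_smul_of_nonneg hle ?_
    have hc : ((M : ℂ) - 1)⁻¹ = ((((M : ℝ) - 1)⁻¹ : ℝ) : ℂ) := by push_cast; ring
    rw [hc, Complex.zero_le_real]
    have h2 : (2 : ℝ) ≤ (M : ℝ) := by exact_mod_cast hM
    have : (0 : ℝ) ≤ (M : ℝ) - 1 := by linarith
    positivity
  have hσtr : σ.trace = 1 := by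
    rw [hσ, Matrix.trace_smul, Matrix.trace_sub, Matrix.trace_smul, hδ.1.2, hρ'.2]
    rw [smul_eq_mul, smul_eq_mul, mul_one]
    field_simp
  set Lam : Matrix (Fin M) (Fin M) ℂ →ₗ[ℂ] Matrix (Fin d) (Fin d) ℂ :=
    mpMap Ψ ρ' + mpMap (1 - Ψ) σ with hLam
  have happ : ∀ ω, Lam ω
      = (Ψ * ω).trace • ρ' + (ω.trace - (Ψ * ω).trace) • σ := by
    intro ω
    rw [hLam, LinearMap.add_apply, mpMap_apply, mpMap_apply, Matrix.sub_mul, Matrix.one_mul,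
      Matrix.trace_sub]
  refine ⟨Lam, ?_, ?_, ?_, ?_, ?_⟩
  · intro ω hω
    rw [happ, hω.2]
    ext i j
    simp only [hσ, Matrix.add_apply, Matrix.smul_apply, Matrix.sub_apply, smul_eq_mul]
    field_simp
    ring
  · rw [hLam]
    exact completelyPositive_add (mpMap_cp hΨps hρ'.1) (mpMap_cp h1Ψps hσps)
  · intro ω
    rw [happ, Matrix.trace_add, Matrix.trace_smul, Matrix.trace_smul, hρ'.2, hσtr,
      smul_eq_mul, smul_eq_mul, mul_one, mul_one]
    ring
  · intro δ₀ hδ₀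
    have htr0 : (Ψ * δ₀).trace = (M : ℂ)⁻¹ := by
      have hrow : ∀ i : Fin M, ∑ j, Ψ i j * δ₀ j i = (M : ℂ)⁻¹ * δ₀ i i := by
        intro i
        rw [Finset.sum_eq_single i]
        · rw [hΨentry]
        · intro b _ hb
          simp [hδ₀.2 hb]
        · simp
      calc (Ψ * δ₀).trace = ∑ i, ∑ j, Ψ i j * δ₀ j i := by
            simp [Matrix.trace, Matrix.diag, Matrix.mul_apply]
        _ = ∑ i, (M : ℂ)⁻¹ * δ₀ i i := Finset.sum_congr rfl fun i _ => hrow i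
        _ = (M : ℂ)⁻¹ * δ₀.trace := by rw [← Finset.mul_sum]; rfl
        _ = (M : ℂ)⁻¹ := by rw [hδ₀.1.2, mul_one]
    have hout : Lam δ₀ = δ := by
      rw [happ, htr0, hδ₀.1.2]
      ext i j
      simp only [hσ, Matrix.add_apply, Matrix.smul_apply, Matrix.sub_apply, smul_eq_mul]
      field_simp
      ring
    rw [hout]
    exact hδ
  · have htrΨΨ : (Ψ * Ψ).trace = 1 := by rw [hΨ2, hΨtr]
    rw [happ, htrΨΨ, hΨtr]
    simp

end OneShot
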